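/- Randomized Boolean functions cannot beat deterministic ones: for any random variable U taking values in \{0,1\} such that U \to X^n \to Y^n is a Markov chain, there exists a deterministic Boolean function b: \{0,1\}^n \to \{0,1\} with I(b(X^n); Y^n) \ge I(U; Y^n). -/

import Mathlib

open Finset

/-- `f2 x = -x log₂ x`, the summand of base-2 Shannon entropy. -/
noncomputable def f2 (x : ℝ) : ℝ := -x * Real.logb 2 x

/-- Binary entropy function `H(α)` (base 2). -/
noncomputable def binEnt (α : ℝ) : ℝ := f2 α + f2 (1 - α)

/-- Joint pmf of `(Xⁿ, Yⁿ)` where `Xⁿ` is i.i.d. Bernoulli(1/2) and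
`Yⁿ = Xⁿ ⊕ Zⁿ` with `Zⁿ` i.i.d. Bernoulli(α) (a memoryless BSC(α)). -/
noncomputable def jointP (n : ℕ) (α : ℝ) (x y : Fin n → Bool) : ℝ :=
  (1/2)^n * ∏ i, (if x i = y i then 1 - α else α)

/-- `Pr{b(Xⁿ) = u, Yⁿ = y}`. -/
noncomputable def pBY (n : ℕ) (α : ℝ) (b : (Fin n → Bool) → Bool) (u : Bool)
    (y : Fin n → Bool) : ℝ :=
  ∑ x : Fin n → Bool, if b x = u then jointP n α x y else 0

/-- `Pr{b(Xⁿ) = u}` for `Xⁿ` uniform on `{0,1}ⁿ`. -/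
noncomputable def pB (n : ℕ) (b : (Fin n → Bool) → Bool) (u : Bool) : ℝ :=
  ∑ x : Fin n → Bool, if b x = u then (1/2)^n else 0

/-- `H(b(Xⁿ))`, the entropy of the Boolean function's output. -/
noncomputable def HB (n : ℕ) (b : (Fin n → Bool) → Bool) : ℝ :=
  ∑ u : Bool, f2 (pB n b u)

/-- `Pr{b(Xⁿ) = 0 ∣ Yⁿ = y}` (note `Pr{Yⁿ = y} = 2⁻ⁿ` since `Yⁿ` is uniform;
`0` is encoded as `false`). -/
noncomputable def condP (n : ℕ) (α : ℝ) (b : (Fin n → Bool) → Bool)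
    (y : Fin n → Bool) : ℝ :=
  (2:ℝ)^n * pBY n α b false y

/-- The conditional entropy `H(b(Xⁿ) ∣ Yⁿ)`. -/
noncomputable def condHB (n : ℕ) (α : ℝ) (b : (Fin n → Bool) → Bool) : ℝ :=
  ∑ y : Fin n → Bool, (1/2)^n * ∑ u : Bool, f2 ((2:ℝ)^n * pBY n α b u y)

/-- The mutual information `I(b(Xⁿ); Yⁿ) = H(b(Xⁿ)) - H(b(Xⁿ) ∣ Yⁿ)`. -/
noncomputable def MI (n : ℕ) (α : ℝ) (b : (Fin n → Bool) → Bool) : ℝ :=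
  HB n b - condHB n α b

/-- `Pr{U = u ∣ Xⁿ = x}` for a randomized bit `U` with `r x = Pr{U = 0 ∣ Xⁿ = x}`
(`0` encoded as `false`). -/
noncomputable def wgt {n : ℕ} (r : (Fin n → Bool) → ℝ) (u : Bool)
    (x : Fin n → Bool) : ℝ :=
  if u then 1 - r x else r x

/-- `Pr{U = u}`. -/
noncomputable def pU (n : ℕ) (r : (Fin n → Bool) → ℝ) (u : Bool) : ℝ :=
  ∑ x : Fin n → Bool, (1/2)^n * wgt r u x

/-- `Pr{U = u, Yⁿ = y}` for the Markov chain `U → Xⁿ → Yⁿ`. -/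
noncomputable def pUY (n : ℕ) (α : ℝ) (r : (Fin n → Bool) → ℝ) (u : Bool)
    (y : Fin n → Bool) : ℝ :=
  ∑ x : Fin n → Bool, jointP n α x y * wgt r u x

/-- `I(U; Yⁿ) = H(U) - H(U ∣ Yⁿ)`. -/
noncomputable def MIr (n : ℕ) (α : ℝ) (r : (Fin n → Bool) → ℝ) : ℝ :=
  (∑ u : Bool, f2 (pU n r u)) -
    ∑ y : Fin n → Bool, (1/2)^n * ∑ u : Bool, f2 ((2:ℝ)^n * pUY n α r u y)

/-- Randomized Boolean functions cannot beat deterministic ones: for any binary `U`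
with `U → Xⁿ → Yⁿ` a Markov chain (described by `r x = Pr{U = 0 ∣ Xⁿ = x}`), there
is a deterministic `b` with `I(b(Xⁿ); Yⁿ) ≥ I(U; Yⁿ)`. -/


noncomputable def kl (a b : ℝ) : ℝ := a * Real.log a - a * Real.log b

lemma log2_pos : (0:ℝ) < Real.log 2 := Real.log_pos (by norm_num)

lemma kl_zero (b : ℝ) : kl 0 b = 0 := by simp [kl]

lemma kl_smul {s a b : ℝ} (hs : 0 < s) (ha : 0 ≤ a) (hb : 0 < b) :
    kl (s * a) (s * b) = s * kl a b := by
  rcases ha.eq_or_lt with h | h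
  · simp [← h, kl]
  · unfold kl
    rw [Real.log_mul hs.ne' h.ne', Real.log_mul hs.ne' hb.ne']
    ring

lemma kl_anti {c B B' : ℝ} (hc : 0 ≤ c) (hB' : 0 < B') (h : B' ≤ B) :
    kl c B ≤ kl c B' := by
  have := Real.log_le_log hB' h
  unfold kl
  nlinarith

lemma kl_add_le {c0 c1 d0 d1 : ℝ} (hc0 : 0 < c0) (hc1 : 0 < c1)
    (hd0 : 0 < d0) (hd1 : 0 < d1) :
    kl (c0 + c1) (d0 + d1) ≤ kl c0 d0 + kl c1 d1 := by
  have ha : (0:ℝ) < c0 + c1 := by positivity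
  have hb : (0:ℝ) < d0 + d1 := by positivity
  have key : ∀ c d : ℝ, 0 < c → 0 < d →
      c - d * (c0 + c1) / (d0 + d1) ≤
        c * (Real.log c - Real.log d - Real.log (c0 + c1) + Real.log (d0 + d1)) := by
    intro c d hc hd
    have hx : 0 < c * (d0 + d1) / (d * (c0 + c1)) := by positivity
    have h1 := Real.one_sub_inv_le_log_of_pos hx
    have h2 : Real.log (c * (d0 + d1) / (d * (c0 + c1)))
        = Real.log c + Real.log (d0 + d1) - Real.log d - Real.log (c0 + c1) := by
      rw [Real.log_div (by positivity) (by positivity), Real.log_mul hc.ne' hb.ne',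
        Real.log_mul hd.ne' ha.ne']
      ring
    have h3 : (c * (d0 + d1) / (d * (c0 + c1)))⁻¹ = d * (c0 + c1) / (c * (d0 + d1)) := by
      field_simp
    rw [h2, h3] at h1
    have h5 := mul_le_mul_of_nonneg_left h1 hc.le
    have h6 : c * (1 - d * (c0 + c1) / (c * (d0 + d1)))
        = c - d * (c0 + c1) / (d0 + d1) := by
      field_simp
    calc c - d * (c0 + c1) / (d0 + d1)
        = c * (1 - d * (c0 + c1) / (c * (d0 + d1))) := h6.symm
      _ ≤ c * (Real.log c + Real.log (d0 + d1) - Real.log d - Real.log (c0 + c1)) := h5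
      _ = c * (Real.log c - Real.log d - Real.log (c0 + c1) + Real.log (d0 + d1)) := by ring
  have s0 := key c0 d0 hc0 hd0
  have s1 := key c1 d1 hc1 hd1
  have hdd : d0 * (c0 + c1) / (d0 + d1) + d1 * (c0 + c1) / (d0 + d1) = c0 + c1 := by
    field_simp
  have e : c0 * (Real.log c0 - Real.log d0 - Real.log (c0 + c1) + Real.log (d0 + d1))
      + c1 * (Real.log c1 - Real.log d1 - Real.log (c0 + c1) + Real.log (d0 + d1))
      = (kl c0 d0 + kl c1 d1) - kl (c0 + c1) (d0 + d1) := by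
    simp only [kl]; ring
  linarith

lemma kl_seg {t a0 a1 b0 b1 : ℝ} (ht0 : 0 ≤ t) (ht1 : t ≤ 1)
    (ha0 : 0 ≤ a0) (ha1 : 0 ≤ a1) (hb0 : 0 ≤ b0) (hb1 : 0 ≤ b1)
    (h0 : b0 = 0 → a0 = 0) (h1 : b1 = 0 → a1 = 0) :
    kl ((1-t)*a0 + t*a1) ((1-t)*b0 + t*b1) ≤ (1-t) * kl a0 b0 + t * kl a1 b1 := by
  rcases ht0.eq_or_lt with h | htpos
  · simp [← h]
  rcases ht1.eq_or_lt with h | htlt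
  · simp [h]
  have h1t : 0 < 1 - t := by linarith
  rcases hb0.eq_or_lt with hb0' | hb0'
  · -- b0 = 0 hence a0 = 0
    have ha0' := h0 hb0'.symm
    subst ha0'
    rw [← hb0']
    simp only [mul_zero, zero_add, kl_zero, mul_zero, zero_add]
    rcases hb1.eq_or_lt with hb1' | hb1'
    · have := h1 hb1'.symm; subst this
      simp [← hb1', kl_zero]
    · rw [kl_smul htpos ha1 hb1']
  rcases hb1.eq_or_lt with hb1' | hb1'
  · have ha1' := h1 hb1'.symm
    subst ha1'
    rw [← hb1']
    simp only [mul_zero, add_zero, kl_zero, mul_zero, add_zero]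
    rw [kl_smul h1t ha0 hb0']
  -- both b positive
  rcases ha0.eq_or_lt with ha0' | ha0'
  · rw [← ha0']
    simp only [mul_zero, zero_add, kl_zero, mul_zero, zero_add]
    rcases ha1.eq_or_lt with ha1' | ha1'
    · simp [← ha1', kl_zero]
    · have h1 : kl (t*a1) ((1-t)*b0 + t*b1) ≤ kl (t*a1) (t*b1) :=
        kl_anti (by positivity) (by positivity) (by nlinarith)
      rw [kl_smul htpos ha1 hb1'] at h1
      exact h1
  rcases ha1.eq_or_lt with ha1' | ha1'
  · rw [← ha1']
    simp only [mul_zero, add_zero, kl_zero, mul_zero, add_zero]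
    have h1 : kl ((1-t)*a0) ((1-t)*b0 + t*b1) ≤ kl ((1-t)*a0) ((1-t)*b0) :=
      kl_anti (by positivity) (by positivity) (by nlinarith)
    rw [kl_smul h1t ha0 hb0'] at h1
    exact h1
  -- all positive
  have := kl_add_le (c0 := (1-t)*a0) (c1 := t*a1) (d0 := (1-t)*b0) (d1 := t*b1)
    (by positivity) (by positivity) (by positivity) (by positivity)
  rwa [kl_smul h1t ha0 hb0', kl_smul htpos ha1 hb1'] at this
section probs
variable {n : ℕ} {α : ℝ} {r : (Fin n → Bool) → ℝ}

lemma jointP_nonneg (hα : α ∈ Set.Icc (0:ℝ) (1/2)) (x y : Fin n → Bool) :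
    0 ≤ jointP n α x y := by
  obtain ⟨h0, h1⟩ := hα
  unfold jointP
  apply mul_nonneg (by positivity)
  exact Finset.prod_nonneg fun i _ => by split <;> linarith

lemma sum_y_jointP (x : Fin n → Bool) :
    ∑ y : Fin n → Bool, jointP n α x y = (1/2)^n := by
  unfold jointP
  rw [← Finset.mul_sum, ← Fintype.prod_sum fun i b => if x i = b then 1 - α else α]
  have h : ∀ i : Fin n, (∑ b : Bool, if x i = b then 1 - α else α) = 1 := by
    intro i
    rw [Fintype.sum_bool]
    cases h : x i <;> simp <;> ring
  rw [Finset.prod_congr rfl fun i _ => h i, Finset.prod_const_one, mul_one]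

lemma wgt_nonneg (hr : ∀ x, r x ∈ Set.Icc (0:ℝ) 1) (u : Bool) (x : Fin n → Bool) :
    0 ≤ wgt r u x := by
  obtain ⟨h0, h1⟩ := hr x
  cases u <;> simp [wgt] <;> linarith

lemma pU_nonneg (hr : ∀ x, r x ∈ Set.Icc (0:ℝ) 1) (u : Bool) : 0 ≤ pU n r u :=
  Finset.sum_nonneg fun x _ => mul_nonneg (by positivity) (wgt_nonneg hr u x)

lemma pUY_nonneg (hα : α ∈ Set.Icc (0:ℝ) (1/2)) (hr : ∀ x, r x ∈ Set.Icc (0:ℝ) 1)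
    (u : Bool) (y : Fin n → Bool) : 0 ≤ pUY n α r u y :=
  Finset.sum_nonneg fun x _ => mul_nonneg (jointP_nonneg hα x y) (wgt_nonneg hr u x)

lemma sum_y_pUY (u : Bool) : ∑ y : Fin n → Bool, pUY n α r u y = pU n r u := by
  unfold pUY pU
  rw [Finset.sum_comm]
  exact Finset.sum_congr rfl fun x _ => by rw [← Finset.sum_mul, sum_y_jointP]

lemma pUY_le_pU (hα : α ∈ Set.Icc (0:ℝ) (1/2)) (hr : ∀ x, r x ∈ Set.Icc (0:ℝ) 1)
    (u : Bool) (y : Fin n → Bool) : pUY n α r u y ≤ pU n r u := by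
  rw [← sum_y_pUY (α := α) u]
  exact Finset.single_le_sum (fun y' _ => pUY_nonneg hα hr u y') (Finset.mem_univ y)

lemma pU_zero (hα : α ∈ Set.Icc (0:ℝ) (1/2)) (hr : ∀ x, r x ∈ Set.Icc (0:ℝ) 1)
    (u : Bool) (y : Fin n → Bool) (h : pU n r u = 0) : pUY n α r u y = 0 :=
  le_antisymm (h ▸ pUY_le_pU hα hr u y) (pUY_nonneg hα hr u y)

lemma MIr_eq_kl (hα : α ∈ Set.Icc (0:ℝ) (1/2)) (hr : ∀ x, r x ∈ Set.Icc (0:ℝ) 1) :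
    MIr n α r = (∑ y : Fin n → Bool, ∑ u : Bool,
      kl (pUY n α r u y) ((1/2)^n * pU n r u)) / Real.log 2 := by
  have hL := log2_pos
  rw [eq_div_iff hL.ne']
  -- canonical pieces
  have hK : ∀ (u : Bool) (y : Fin n → Bool),
      kl (pUY n α r u y) ((1/2)^n * pU n r u)
      = (pUY n α r u y * Real.log (pUY n α r u y)
          + (n : ℝ) * Real.log 2 * pUY n α r u y)
        - pUY n α r u y * Real.log (pU n r u) := by
    intro u y
    rcases (pUY_nonneg hα hr u y).eq_or_lt with h | h
    · simp [← h, kl]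
    · have hq : 0 < pU n r u := lt_of_lt_of_le h (pUY_le_pU hα hr u y)
      unfold kl
      rw [Real.log_mul (by positivity) hq.ne']
      rw [show ((1:ℝ)/2)^n = ((2:ℝ)^n)⁻¹ by rw [one_div, inv_pow]]
      rw [Real.log_inv, Real.log_pow]
      ring
  have hA : ∀ u : Bool, f2 (pU n r u) * Real.log 2 = -(pU n r u * Real.log (pU n r u)) := by
    intro u
    unfold f2 Real.logb
    field_simp
  have hC : ∀ (y : Fin n → Bool) (u : Bool),
      ((1:ℝ)/2)^n * f2 ((2:ℝ)^n * pUY n α r u y) * Real.log 2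
      = -(pUY n α r u y * Real.log (pUY n α r u y)
          + (n : ℝ) * Real.log 2 * pUY n α r u y) := by
    intro y u
    rcases (pUY_nonneg hα hr u y).eq_or_lt with h | h
    · simp [← h, f2]
    · unfold f2 Real.logb
      rw [Real.log_mul (by positivity) h.ne', Real.log_pow]
      have h2 : ((1:ℝ)/2)^n * (2:ℝ)^n = 1 := by
        rw [← mul_pow]; norm_num
      field_simp
      linear_combination (-((n : ℝ) * Real.log 2 + Real.log (pUY n α r u y))) * h2
  have e2 : ∀ y : Fin n → Bool,
      ((1:ℝ)/2)^n * (∑ u : Bool, f2 ((2:ℝ)^n * pUY n α r u y)) * Real.log 2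
      = ∑ u : Bool, -(pUY n α r u y * Real.log (pUY n α r u y)
          + (n : ℝ) * Real.log 2 * pUY n α r u y) := by
    intro y
    rw [Finset.mul_sum, Finset.sum_mul]
    exact Finset.sum_congr rfl fun u _ => hC y u
  have hR : (∑ y : Fin n → Bool, ∑ u : Bool, kl (pUY n α r u y) ((1/2)^n * pU n r u))
      = (∑ y : Fin n → Bool, ∑ u : Bool,
          (pUY n α r u y * Real.log (pUY n α r u y)
            + (n:ℝ) * Real.log 2 * pUY n α r u y))
        - ∑ u : Bool, pU n r u * Real.log (pU n r u) := by
    rw [Finset.sum_congr rfl fun y _ => Finset.sum_congr rfl fun u _ => hK u y]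
    simp only [Finset.sum_sub_distrib]
    congr 1
    rw [Finset.sum_comm]
    exact Finset.sum_congr rfl fun u _ => by rw [← Finset.sum_mul, sum_y_pUY]
  have hLm : MIr n α r * Real.log 2
      = (∑ y : Fin n → Bool, ∑ u : Bool,
          (pUY n α r u y * Real.log (pUY n α r u y)
            + (n:ℝ) * Real.log 2 * pUY n α r u y))
        - ∑ u : Bool, pU n r u * Real.log (pU n r u) := by
    calc MIr n α r * Real.log 2
        = (∑ u : Bool, f2 (pU n r u) * Real.log 2)
          - ∑ y : Fin n → Bool,
              ((1:ℝ)/2)^n * (∑ u : Bool, f2 ((2:ℝ)^n * pUY n α r u y)) * Real.log 2 := by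
          unfold MIr; rw [sub_mul, Finset.sum_mul, Finset.sum_mul]
      _ = (∑ u : Bool, -(pU n r u * Real.log (pU n r u)))
          - ∑ y : Fin n → Bool, ∑ u : Bool,
              -(pUY n α r u y * Real.log (pUY n α r u y)
                + (n:ℝ) * Real.log 2 * pUY n α r u y) := by
          rw [Finset.sum_congr rfl fun u _ => hA u,
            Finset.sum_congr rfl fun y _ => e2 y]
      _ = _ := by simp only [Finset.sum_neg_distrib]; ring
  rw [hR, hLm]
end probs

lemma wgt_comb {t : ℝ} (r0 r1 : (Fin n → Bool) → ℝ) (u : Bool) (x : Fin n → Bool) :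
    wgt (fun x => (1-t) * r0 x + t * r1 x) u x
      = (1-t) * wgt r0 u x + t * wgt r1 u x := by
  cases u <;> simp [wgt] <;> ring

lemma pU_comb {t : ℝ} (r0 r1 : (Fin n → Bool) → ℝ) (u : Bool) :
    pU n (fun x => (1-t) * r0 x + t * r1 x) u
      = (1-t) * pU n r0 u + t * pU n r1 u := by
  unfold pU
  simp only [Finset.mul_sum, ← Finset.sum_add_distrib]
  exact Finset.sum_congr rfl fun x _ => by rw [wgt_comb]; ring

lemma pUY_comb {t : ℝ} (r0 r1 : (Fin n → Bool) → ℝ) (u : Bool) (y : Fin n → Bool) :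
    pUY n α (fun x => (1-t) * r0 x + t * r1 x) u y
      = (1-t) * pUY n α r0 u y + t * pUY n α r1 u y := by
  unfold pUY
  simp only [Finset.mul_sum, ← Finset.sum_add_distrib]
  exact Finset.sum_congr rfl fun x _ => by rw [wgt_comb]; ring

lemma MIr_convex (hα : α ∈ Set.Icc (0:ℝ) (1/2)) {r0 r1 : (Fin n → Bool) → ℝ}
    (hr0 : ∀ x, r0 x ∈ Set.Icc (0:ℝ) 1) (hr1 : ∀ x, r1 x ∈ Set.Icc (0:ℝ) 1)
    {t : ℝ} (ht0 : 0 ≤ t) (ht1 : t ≤ 1) :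
    MIr n α (fun x => (1-t) * r0 x + t * r1 x)
      ≤ (1-t) * MIr n α r0 + t * MIr n α r1 := by
  have hrc : ∀ x, (1-t) * r0 x + t * r1 x ∈ Set.Icc (0:ℝ) 1 := by
    intro x
    obtain ⟨h0, h1⟩ := hr0 x; obtain ⟨h0', h1'⟩ := hr1 x
    constructor <;> nlinarith
  rw [MIr_eq_kl hα hr0, MIr_eq_kl hα hr1, MIr_eq_kl hα hrc]
  have hstep : (1-t) * ((∑ y : Fin n → Bool, ∑ u : Bool,
        kl (pUY n α r0 u y) ((1/2)^n * pU n r0 u)) / Real.log 2)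
      + t * ((∑ y : Fin n → Bool, ∑ u : Bool,
        kl (pUY n α r1 u y) ((1/2)^n * pU n r1 u)) / Real.log 2)
      = ((1-t) * (∑ y : Fin n → Bool, ∑ u : Bool,
          kl (pUY n α r0 u y) ((1/2)^n * pU n r0 u))
        + t * (∑ y : Fin n → Bool, ∑ u : Bool,
          kl (pUY n α r1 u y) ((1/2)^n * pU n r1 u))) / Real.log 2 := by
    ring
  rw [hstep]
  have hL := log2_pos
  gcongr
  have hterm : ∀ (y : Fin n → Bool) (u : Bool),
      kl (pUY n α (fun x => (1-t) * r0 x + t * r1 x) u y)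
        ((1/2)^n * pU n (fun x => (1-t) * r0 x + t * r1 x) u)
      ≤ (1-t) * kl (pUY n α r0 u y) ((1/2)^n * pU n r0 u)
        + t * kl (pUY n α r1 u y) ((1/2)^n * pU n r1 u) := by
    intro y u
    rw [pUY_comb, pU_comb]
    rw [show ((1:ℝ)/2)^n * ((1-t) * pU n r0 u + t * pU n r1 u)
        = (1-t) * (((1:ℝ)/2)^n * pU n r0 u) + t * (((1:ℝ)/2)^n * pU n r1 u) from by ring]
    refine kl_seg ht0 ht1 (pUY_nonneg hα hr0 u y) (pUY_nonneg hα hr1 u y)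
      (mul_nonneg (by positivity) (pU_nonneg hr0 u))
      (mul_nonneg (by positivity) (pU_nonneg hr1 u)) ?_ ?_
    · intro h
      have hp : pU n r0 u = 0 := by
        rcases mul_eq_zero.mp h with h' | h'
        · exact absurd h' (by positivity)
        · exact h'
      exact pU_zero hα hr0 u y hp
    · intro h
      have hp : pU n r1 u = 0 := by
        rcases mul_eq_zero.mp h with h' | h'
        · exact absurd h' (by positivity)
        · exact h'
      exact pU_zero hα hr1 u y hp
  calc (∑ y : Fin n → Bool, ∑ u : Bool,
        kl (pUY n α (fun x => (1-t) * r0 x + t * r1 x) u y)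
          ((1/2)^n * pU n (fun x => (1-t) * r0 x + t * r1 x) u))
      ≤ ∑ y : Fin n → Bool, ∑ u : Bool,
          ((1-t) * kl (pUY n α r0 u y) ((1/2)^n * pU n r0 u)
            + t * kl (pUY n α r1 u y) ((1/2)^n * pU n r1 u)) :=
        Finset.sum_le_sum fun y _ => Finset.sum_le_sum fun u _ => hterm y u
    _ = _ := by simp only [Finset.sum_add_distrib, Finset.mul_sum]

theorem randomized_no_better (n : ℕ) (α : ℝ) (hα : α ∈ Set.Icc (0:ℝ) (1/2))
    (r : (Fin n → Bool) → ℝ) (hr : ∀ x, r x ∈ Set.Icc (0:ℝ) 1) :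
    ∃ b : (Fin n → Bool) → Bool, MI n α b ≥ MIr n α r := by
  classical
  have main : ∀ s : Finset (Fin n → Bool), ∀ r : (Fin n → Bool) → ℝ,
      (∀ x, r x ∈ Set.Icc (0:ℝ) 1) → (∀ x ∉ s, r x = 0 ∨ r x = 1) →
      ∃ b : (Fin n → Bool) → Bool, MI n α b ≥ MIr n α r := by
    intro s
    induction s using Finset.induction_on with
    | empty =>
      intro r hr h01
      refine ⟨fun x => if r x = 0 then true else false, ?_⟩
      have hwgt : ∀ (u : Bool) (x : Fin n → Bool) (c : ℝ),
          (if (if r x = 0 then true else false) = u then c else 0) = c * wgt r u x := by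
        intro u x c
        rcases h01 x (Finset.notMem_empty x) with h | h <;> cases u <;>
          simp [wgt, h]
      have h1 : ∀ u, pB n (fun x => if r x = 0 then true else false) u = pU n r u := by
        intro u
        unfold pB pU
        exact Finset.sum_congr rfl fun x _ => hwgt u x _
      have h2 : ∀ u y, pBY n α (fun x => if r x = 0 then true else false) u y
          = pUY n α r u y := by
        intro u y
        unfold pBY pUY
        exact Finset.sum_congr rfl fun x _ => hwgt u x _
      have : MI n α (fun x => if r x = 0 then true else false) = MIr n α r := by
        simp only [MI, HB, condHB, MIr, h1, h2]
      exact ge_of_eq this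
    | @insert x0 s' hx0 ih =>
      intro r hr h01
      set t := r x0 with ht
      obtain ⟨ht0, ht1⟩ := hr x0
      set r0 := Function.update r x0 0 with hr0def
      set r1 := Function.update r x0 1 with hr1def
      have hr0 : ∀ x, r0 x ∈ Set.Icc (0:ℝ) 1 := by
        intro x
        by_cases h : x = x0
        · rw [hr0def, h, Function.update_self]
          constructor <;> norm_num
        · rw [hr0def, Function.update_of_ne h]; exact hr x
      have hr1 : ∀ x, r1 x ∈ Set.Icc (0:ℝ) 1 := by
        intro x
        by_cases h : x = x0
        · rw [hr1def, h, Function.update_self]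
          constructor <;> norm_num
        · rw [hr1def, Function.update_of_ne h]; exact hr x
      have hcomb : r = fun x => (1-t) * r0 x + t * r1 x := by
        funext x
        by_cases h : x = x0
        · rw [hr0def, hr1def, h, Function.update_self, Function.update_self]
          simp [ht]
        · rw [hr0def, hr1def, Function.update_of_ne h, Function.update_of_ne h]
          ring
      have conv : MIr n α r ≤ (1-t) * MIr n α r0 + t * MIr n α r1 := by
        rw [hcomb]
        exact MIr_convex hα hr0 hr1 ht0 ht1
      have hb0 : ∀ x ∉ s', r0 x = 0 ∨ r0 x = 1 := by
        intro x hx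
        by_cases h : x = x0
        · subst h; left; rw [hr0def, Function.update_self]
        · have hni : x ∉ insert x0 s' := by simp [h, hx]
          rw [hr0def, Function.update_of_ne h]
          exact h01 x hni
      have hb1 : ∀ x ∉ s', r1 x = 0 ∨ r1 x = 1 := by
        intro x hx
        by_cases h : x = x0
        · subst h; right; rw [hr1def, Function.update_self]
        · have hni : x ∉ insert x0 s' := by simp [h, hx]
          rw [hr1def, Function.update_of_ne h]
          exact h01 x hni
      rcases le_total (MIr n α r0) (MIr n α r1) with hle | hle
      · obtain ⟨b, hb⟩ := ih r1 hr1 hb1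
        exact ⟨b, le_trans (by nlinarith) hb⟩
      · obtain ⟨b, hb⟩ := ih r0 hr0 hb0
        exact ⟨b, le_trans (by nlinarith) hb⟩
  exact main Finset.univ r hr (fun x hx => absurd (Finset.mem_univ x) hx)
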